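/- Let ψ : ℝ → ℝ be continuous and nondecreasing, and let G be its Beurling–Ahlfors extension. Then G is differentiable at every point (x,y) ∈ ℝ×(0,∞); the partial derivative in x of the first coordinate of G equals (ψ(x+y) − ψ(x−y))/(2y); each of the four first-order partial derivatives of the coordinates of G at (x,y) is bounded in absolute value by (ψ(x+y) − ψ(x−y))/y; and consequently the operator norm of the total derivative DG(x,y) is at most 4·(ψ(x+y) − ψ(x−y))/y. -/

import Mathlib

open MeasureTheory

/-- The Beurling–Ahlfors extension of `ψ : ℝ → ℝ`, as a map on the (open) upper half-plane. -/
noncomputable def BA (ψ : ℝ → ℝ) (p : ℝ × ℝ) : ℝ × ℝ :=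
  ((1 / 2) * ∫ t in (0 : ℝ)..1, (ψ (p.1 + t * p.2) + ψ (p.1 - t * p.2)),
    ∫ t in (0 : ℝ)..1, (ψ (p.1 + t * p.2) - ψ (p.1 - t * p.2)))

set_option maxHeartbeats 1000000 in
theorem stmt10 (ψ : ℝ → ℝ) (hmono : Monotone ψ) (hcont : Continuous ψ)
    (x y : ℝ) (hy : 0 < y) :
    ∃ L : ℝ × ℝ →L[ℝ] ℝ × ℝ,
      HasFDerivAt (BA ψ) L (x, y) ∧
      (L (1, 0)).1 = (ψ (x + y) - ψ (x - y)) / (2 * y) ∧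
      |(L (1, 0)).1| ≤ (ψ (x + y) - ψ (x - y)) / y ∧
      |(L (1, 0)).2| ≤ (ψ (x + y) - ψ (x - y)) / y ∧
      |(L (0, 1)).1| ≤ (ψ (x + y) - ψ (x - y)) / y ∧
      |(L (0, 1)).2| ≤ (ψ (x + y) - ψ (x - y)) / y ∧
      ‖L‖ ≤ 4 * (ψ (x + y) - ψ (x - y)) / y := by
  classical
  set F : ℝ → ℝ := fun u => ∫ t in (0:ℝ)..u, ψ t with hFdef
  have hFder : ∀ a : ℝ, HasDerivAt F (ψ a) a := fun a =>
    intervalIntegral.integral_hasDerivAt_right (hcont.intervalIntegrable _ _)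
      (hcont.stronglyMeasurable.stronglyMeasurableAtFilter) hcont.continuousAt
  -- the derivative of the nicer representative G
  have hadd : HasFDerivAt (fun p : ℝ × ℝ => p.1 + p.2)
      (ContinuousLinearMap.fst ℝ ℝ ℝ + ContinuousLinearMap.snd ℝ ℝ ℝ) (x, y) :=
    hasFDerivAt_fst.add hasFDerivAt_snd
  have hsub : HasFDerivAt (fun p : ℝ × ℝ => p.1 - p.2)
      (ContinuousLinearMap.fst ℝ ℝ ℝ - ContinuousLinearMap.snd ℝ ℝ ℝ) (x, y) :=
    hasFDerivAt_fst.sub hasFDerivAt_snd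
  have hA : HasFDerivAt (fun p : ℝ × ℝ => F (p.1 + p.2))
      (ψ (x + y) • (ContinuousLinearMap.fst ℝ ℝ ℝ + ContinuousLinearMap.snd ℝ ℝ ℝ)) (x, y) :=
    by have := (hFder (x + y)).comp_hasFDerivAt (x, y) hadd; exact this
  have hB : HasFDerivAt (fun p : ℝ × ℝ => F (p.1 - p.2))
      (ψ (x - y) • (ContinuousLinearMap.fst ℝ ℝ ℝ - ContinuousLinearMap.snd ℝ ℝ ℝ)) (x, y) :=
    by have := (hFder (x - y)).comp_hasFDerivAt (x, y) hsub; exact this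
  have hC : HasFDerivAt (fun p : ℝ × ℝ => F p.1)
      (ψ x • (ContinuousLinearMap.fst ℝ ℝ ℝ)) (x, y) :=
    by have := (hFder x).comp_hasFDerivAt (x, y) (hasFDerivAt_fst : HasFDerivAt (Prod.fst : ℝ × ℝ → ℝ) (ContinuousLinearMap.fst ℝ ℝ ℝ) (x, y)); exact this
  have hinv : HasFDerivAt (fun p : ℝ × ℝ => p.2⁻¹)
      ((-(y ^ 2)⁻¹) • ContinuousLinearMap.snd ℝ ℝ ℝ) (x, y) :=
    (hasDerivAt_inv hy.ne').comp_hasFDerivAt (x, y) hasFDerivAt_snd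
  have hG1 := (((hA.sub hB).mul hinv).const_mul (2:ℝ)⁻¹)
  have hG2 := ((hA.add hB).sub (hC.const_mul 2)).mul hinv
  have hG := hG1.prodMk hG2
  -- BA agrees with G near (x, y)
  have hmem : {p : ℝ × ℝ | 0 < p.2} ∈ nhds (x, y) :=
    (isOpen_lt continuous_const continuous_snd).mem_nhds hy
  have heq : BA ψ =ᶠ[nhds (x, y)] (fun p : ℝ × ℝ =>
      ((2:ℝ)⁻¹ * ((F (p.1 + p.2) - F (p.1 - p.2)) * p.2⁻¹),
        (F (p.1 + p.2) + F (p.1 - p.2) - 2 * F p.1) * p.2⁻¹)) := by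
    refine Filter.eventuallyEq_of_mem hmem fun p hp => ?_
    have hp2 : (0:ℝ) < p.2 := hp
    have hint1 : IntervalIntegrable (fun t => ψ (p.1 + t * p.2)) volume (0:ℝ) 1 :=
      (hcont.comp (continuous_const.add (continuous_id.mul continuous_const))).intervalIntegrable _ _
    have hint2 : IntervalIntegrable (fun t => ψ (p.1 - t * p.2)) volume (0:ℝ) 1 :=
      (hcont.comp (continuous_const.sub (continuous_id.mul continuous_const))).intervalIntegrable _ _
    have e1 : ∫ t in (0:ℝ)..1, ψ (p.1 + t * p.2)
        = p.2⁻¹ * (F (p.1 + p.2) - F p.1) := by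
      have h1 : ∫ t in (0:ℝ)..1, ψ (p.1 + t * p.2)
          = ∫ t in (0:ℝ)..1, ψ (p.1 + p.2 * t) := by simp_rw [mul_comm]
      rw [h1, intervalIntegral.integral_comp_add_mul ψ hp2.ne' p.1]
      rw [hFdef]
      rw [intervalIntegral.integral_interval_sub_left (hcont.intervalIntegrable _ _)
        (hcont.intervalIntegrable _ _)]
      simp [smul_eq_mul]
    have e2 : ∫ t in (0:ℝ)..1, ψ (p.1 - t * p.2)
        = p.2⁻¹ * (F p.1 - F (p.1 - p.2)) := by
      have h1 : ∫ t in (0:ℝ)..1, ψ (p.1 - t * p.2)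
          = ∫ t in (0:ℝ)..1, ψ (p.1 - p.2 * t) := by simp_rw [mul_comm]
      rw [h1, intervalIntegral.integral_comp_sub_mul ψ hp2.ne' p.1]
      rw [hFdef]
      rw [intervalIntegral.integral_interval_sub_left (hcont.intervalIntegrable _ _)
        (hcont.intervalIntegrable _ _)]
      simp [smul_eq_mul]
    have hsplit1 : ∫ t in (0:ℝ)..1, (ψ (p.1 + t * p.2) + ψ (p.1 - t * p.2))
        = (∫ t in (0:ℝ)..1, ψ (p.1 + t * p.2)) + ∫ t in (0:ℝ)..1, ψ (p.1 - t * p.2) :=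
      intervalIntegral.integral_add hint1 hint2
    have hsplit2 : ∫ t in (0:ℝ)..1, (ψ (p.1 + t * p.2) - ψ (p.1 - t * p.2))
        = (∫ t in (0:ℝ)..1, ψ (p.1 + t * p.2)) - ∫ t in (0:ℝ)..1, ψ (p.1 - t * p.2) :=
      intervalIntegral.integral_sub hint1 hint2
    show BA ψ p = _
    rw [BA, hsplit1, hsplit2, e1, e2]
    refine Prod.ext ?_ ?_ <;> simp only [] <;> ring
  have hBA := hG.congr_of_eventuallyEq heq
  have hyne : y ≠ 0 := hy.ne'
  -- extract a named L with explicit values on the basis vectors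
  have main : ∃ L : ℝ × ℝ →L[ℝ] ℝ × ℝ, HasFDerivAt (BA ψ) L (x, y) ∧
      L (1, 0) = ((ψ (x + y) - ψ (x - y)) / (2 * y),
        (ψ (x + y) + ψ (x - y) - 2 * ψ x) / y) ∧
      L (0, 1) = ((ψ (x + y) + ψ (x - y)) / (2 * y)
          - (F (x + y) - F (x - y)) / (2 * y ^ 2),
        (ψ (x + y) - ψ (x - y)) / y - (F (x + y) + F (x - y) - 2 * F x) / y ^ 2) := by
    refine ⟨_, hBA, ?_, ?_⟩ <;>
    · rw [Prod.ext_iff]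
      constructor <;>
      · simp only [ContinuousLinearMap.prod_apply, ContinuousLinearMap.add_apply,
          ContinuousLinearMap.sub_apply, ContinuousLinearMap.smul_apply,
          ContinuousLinearMap.coe_fst', ContinuousLinearMap.coe_snd', smul_eq_mul,
          ContinuousLinearMap.neg_apply, Pi.sub_apply, Pi.add_apply]
        field_simp
        try ring
  obtain ⟨L, hL, h10, h01⟩ := main
  clear hBA hG hG1 hG2 heq hA hB hC hinv hadd hsub hmem
  -- basic monotonicity facts
  have hba : ψ (x - y) ≤ ψ (x + y) := hmono (by linarith)
  have hbc : ψ (x - y) ≤ ψ x := hmono (by linarith)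
  have hca : ψ x ≤ ψ (x + y) := hmono (by linarith)
  -- integral bounds
  have hFab : ∀ a b : ℝ, a ≤ b →
      (b - a) * ψ a ≤ F b - F a ∧ F b - F a ≤ (b - a) * ψ b := by
    intro a b hab
    have hsubi : F b - F a = ∫ t in a..b, ψ t :=
      intervalIntegral.integral_interval_sub_left (hcont.intervalIntegrable _ _)
        (hcont.intervalIntegrable _ _)
    constructor
    · calc (b - a) * ψ a = ∫ _ in a..b, ψ a := by
            rw [intervalIntegral.integral_const, smul_eq_mul]
        _ ≤ ∫ t in a..b, ψ t :=
            intervalIntegral.integral_mono_on hab (intervalIntegrable_const)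
              (hcont.intervalIntegrable _ _) (fun u hu => hmono hu.1)
        _ = F b - F a := hsubi.symm
    · calc F b - F a = ∫ t in a..b, ψ t := hsubi
        _ ≤ ∫ _ in a..b, ψ b :=
            intervalIntegral.integral_mono_on hab (hcont.intervalIntegrable _ _)
              (intervalIntegrable_const) (fun u hu => hmono hu.2)
        _ = (b - a) * ψ b := by rw [intervalIntegral.integral_const, smul_eq_mul]
  have hP := hFab (x - y) (x + y) (by linarith)
  have hQ := hFab x (x + y) (by linarith)
  have hR := hFab (x - y) x (by linarith)
  have hP1 : 2 * y * ψ (x - y) ≤ F (x + y) - F (x - y) := by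
    have := hP.1; nlinarith [this]
  have hP2 : F (x + y) - F (x - y) ≤ 2 * y * ψ (x + y) := by
    have := hP.2; nlinarith [this]
  have hQ1 : y * ψ x ≤ F (x + y) - F x := by have := hQ.1; nlinarith [this]
  have hQ2 : F (x + y) - F x ≤ y * ψ (x + y) := by have := hQ.2; nlinarith [this]
  have hR1 : y * ψ (x - y) ≤ F x - F (x - y) := by have := hR.1; nlinarith [this]
  have hR2 : F x - F (x - y) ≤ y * ψ x := by have := hR.2; nlinarith [this]
  have hyab : y * ψ (x - y) ≤ y * ψ (x + y) := by nlinarith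
  -- the four bounds on the partial derivatives
  have hM0 : 0 ≤ (ψ (x + y) - ψ (x - y)) / y := div_nonneg (by linarith) hy.le
  have hy2 : (0 : ℝ) < y ^ 2 := by positivity
  have hb1 : |(ψ (x + y) - ψ (x - y)) / (2 * y)| ≤ (ψ (x + y) - ψ (x - y)) / y := by
    rw [abs_of_nonneg (div_nonneg (by linarith) (by linarith))]
    rw [div_le_div_iff₀ (by linarith) hy]
    nlinarith
  have hb2 : |(ψ (x + y) + ψ (x - y) - 2 * ψ x) / y| ≤ (ψ (x + y) - ψ (x - y)) / y := by
    have habs : |ψ (x + y) + ψ (x - y) - 2 * ψ x| ≤ ψ (x + y) - ψ (x - y) :=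
      abs_le.mpr ⟨by linarith, by linarith⟩
    rw [abs_div, abs_of_pos hy]
    gcongr
  have hb3 : |(ψ (x + y) + ψ (x - y)) / (2 * y) - (F (x + y) - F (x - y)) / (2 * y ^ 2)|
      ≤ (ψ (x + y) - ψ (x - y)) / y := by
    have e : (ψ (x + y) + ψ (x - y)) / (2 * y) - (F (x + y) - F (x - y)) / (2 * y ^ 2)
        = (y * (ψ (x + y) + ψ (x - y)) - (F (x + y) - F (x - y))) / (2 * y ^ 2) := by
      field_simp
    have e2 : (ψ (x + y) - ψ (x - y)) / y
        = (2 * y * (ψ (x + y) - ψ (x - y))) / (2 * y ^ 2) := by field_simp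
    have habs : |y * (ψ (x + y) + ψ (x - y)) - (F (x + y) - F (x - y))|
        ≤ 2 * y * (ψ (x + y) - ψ (x - y)) :=
      abs_le.mpr ⟨by nlinarith, by nlinarith⟩
    rw [e, e2, abs_div, abs_of_pos (by positivity : (0:ℝ) < 2 * y ^ 2)]
    gcongr
  have hb4 : |(ψ (x + y) - ψ (x - y)) / y - (F (x + y) + F (x - y) - 2 * F x) / y ^ 2|
      ≤ (ψ (x + y) - ψ (x - y)) / y := by
    have e : (ψ (x + y) - ψ (x - y)) / y - (F (x + y) + F (x - y) - 2 * F x) / y ^ 2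
        = (y * (ψ (x + y) - ψ (x - y)) - (F (x + y) + F (x - y) - 2 * F x)) / y ^ 2 := by
      field_simp
    have e2 : (ψ (x + y) - ψ (x - y)) / y
        = (y * (ψ (x + y) - ψ (x - y))) / y ^ 2 := by field_simp
    have habs : |y * (ψ (x + y) - ψ (x - y)) - (F (x + y) + F (x - y) - 2 * F x)|
        ≤ y * (ψ (x + y) - ψ (x - y)) :=
      abs_le.mpr ⟨by nlinarith, by nlinarith⟩
    rw [e, e2, abs_div, abs_of_pos hy2]
    gcongr
  have hn10 : ‖L (1, 0)‖ ≤ (ψ (x + y) - ψ (x - y)) / y := by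
    rw [h10, Prod.norm_def]
    exact max_le (by rw [Real.norm_eq_abs]; exact hb1) (by rw [Real.norm_eq_abs]; exact hb2)
  have hn01 : ‖L (0, 1)‖ ≤ (ψ (x + y) - ψ (x - y)) / y := by
    rw [h01, Prod.norm_def]
    exact max_le (by rw [Real.norm_eq_abs]; exact hb3) (by rw [Real.norm_eq_abs]; exact hb4)
  refine ⟨L, hL, by rw [h10], by rw [h10]; exact hb1, by rw [h10]; exact hb2,
    by rw [h01]; exact hb3, by rw [h01]; exact hb4, ?_⟩
  -- operator norm bound
  have h4nn : 0 ≤ 4 * (ψ (x + y) - ψ (x - y)) / y := by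
    rw [mul_div_assoc]; exact mul_nonneg (by norm_num) hM0
  refine ContinuousLinearMap.opNorm_le_bound _ h4nn fun v => ?_
  have hvdec : v = v.1 • ((1 : ℝ), (0 : ℝ)) + v.2 • ((0 : ℝ), (1 : ℝ)) := by
    ext <;> simp
  have hv1 : |v.1| ≤ ‖v‖ := by rw [← Real.norm_eq_abs]; exact norm_fst_le v
  have hv2 : |v.2| ≤ ‖v‖ := by rw [← Real.norm_eq_abs]; exact norm_snd_le v
  calc ‖L v‖ = ‖v.1 • L (1, 0) + v.2 • L (0, 1)‖ := by
        conv_lhs => rw [hvdec]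
        rw [map_add, L.map_smul, L.map_smul]
    _ ≤ ‖v.1 • L (1, 0)‖ + ‖v.2 • L (0, 1)‖ := norm_add_le _ _
    _ = |v.1| * ‖L (1, 0)‖ + |v.2| * ‖L (0, 1)‖ := by
        rw [norm_smul, norm_smul, Real.norm_eq_abs, Real.norm_eq_abs]
    _ ≤ ‖v‖ * ((ψ (x + y) - ψ (x - y)) / y) + ‖v‖ * ((ψ (x + y) - ψ (x - y)) / y) :=
        add_le_add (mul_le_mul hv1 hn10 (norm_nonneg _) (norm_nonneg v))
          (mul_le_mul hv2 hn01 (norm_nonneg _) (norm_nonneg v))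
    _ ≤ 4 * (ψ (x + y) - ψ (x - y)) / y * ‖v‖ := by
        rw [mul_div_assoc]
        nlinarith [norm_nonneg v, hM0]
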